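/- There exist constants 0 < C₁ < C₂ < ∞ such that for all sufficiently small δ > 0, the L¹-modulus of continuity of f(x) = log|sin(πx)| on the circle satisfies C₁ δ |log δ| ≤ Ω₁(f; δ) ≤ C₂ δ |log δ|. -/

import Mathlib

open Real MeasureTheory Set intervalIntegral

noncomputable def gg (x : ℝ) : ℝ := Real.log |Real.sin (Real.pi * x)|

lemma sin_ge_two_mul {x : ℝ} (h0 : 0 ≤ x) (h1 : x ≤ 1/2) : 2*x ≤ Real.sin (Real.pi*x) := by
  have hπ := Real.pi_pos
  have := Real.mul_le_sin (x := Real.pi * x) (by positivity) (by nlinarith)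
  calc 2*x = 2/Real.pi * (Real.pi * x) := by field_simp
  _ ≤ _ := this

lemma sin_pi_reflect (x : ℝ) : Real.sin (Real.pi * (1 - x)) = Real.sin (Real.pi * x) := by
  rw [show Real.pi * (1-x) = Real.pi - Real.pi * x by ring, Real.sin_pi_sub]

lemma sin_ge_prod {x : ℝ} (h0 : 0 ≤ x) (h1 : x ≤ 1) : 2*x*(1-x) ≤ Real.sin (Real.pi*x) := by
  rcases le_total x (1/2) with h | h
  · nlinarith [sin_ge_two_mul h0 h]
  · have := sin_ge_two_mul (x := 1-x) (by linarith) (by linarith)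
    rw [sin_pi_reflect] at this
    nlinarith

lemma sin_pi_pos {x : ℝ} (h0 : 0 < x) (h1 : x < 1) : 0 < Real.sin (Real.pi*x) := by
  have hπ := Real.pi_pos
  exact Real.sin_pos_of_pos_of_lt_pi (by positivity) (by nlinarith)

lemma gg_abs_le {y : ℝ} (h : |y| ≤ 1/2) : |gg y| ≤ -Real.log |y| := by
  rcases eq_or_ne y 0 with rfl | hy
  · simp [gg]
  · have hy0 : 0 < |y| := abs_pos.mpr hy
    have h1 : |Real.sin (Real.pi*y)| = |Real.sin (Real.pi*|y|)| := by
      rcases abs_cases y with ⟨e, _⟩ | ⟨e, _⟩ <;> rw [e]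
      rw [show Real.pi * -y = -(Real.pi*y) by ring, Real.sin_neg, abs_neg]
    have h2 : 0 < Real.sin (Real.pi*|y|) := sin_pi_pos hy0 (by linarith)
    have h3 : 2*|y| ≤ Real.sin (Real.pi*|y|) := sin_ge_two_mul hy0.le h
    have h4 : Real.sin (Real.pi*|y|) ≤ 1 := Real.sin_le_one _
    have h5 : Real.log (Real.sin (Real.pi*|y|)) ≤ 0 := Real.log_nonpos h2.le h4
    have h6 : Real.log (2*|y|) ≤ Real.log (Real.sin (Real.pi*|y|)) :=
      Real.log_le_log (by positivity) h3
    rw [gg, h1, abs_of_pos h2, abs_of_nonpos h5]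
    rw [Real.log_mul (by norm_num) hy0.ne'] at h6
    have := Real.log_nonneg (by norm_num : (1:ℝ) ≤ 2)
    linarith

lemma gg_abs_le' {y : ℝ} (h : |y - 1| ≤ 1/2) : |gg y| ≤ -Real.log |y - 1| := by
  have : gg y = gg (y - 1) := by
    unfold gg
    rw [show Real.pi * y = Real.pi * (y-1) + Real.pi by ring, Real.sin_add_pi, abs_neg]
  rw [this]; exact gg_abs_le h

lemma gg_per : ∀ x : ℝ, gg (x - 1) = gg x := by
  intro x
  unfold gg
  rw [show Real.pi * x = Real.pi * (x-1) + Real.pi by ring, Real.sin_add_pi, abs_neg]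

lemma II_neg_log : IntervalIntegrable (fun x => -Real.log x) volume 0 1 := by
  have := intervalIntegral.intervalIntegrable_deriv_of_nonneg (g := fun x => x - x * Real.log x)
    (g' := fun x => -Real.log x) (a := (0:ℝ)) (b := 1)
    (by
      apply Continuous.continuousOn
      exact continuous_id.sub Real.continuous_mul_log)
    (fun x hx => by
      simp only [min_def, max_def] at hx
      norm_num at hx
      have h1 : HasDerivAt (fun y : ℝ => y * Real.log y) (Real.log x + 1) x :=
        Real.hasDerivAt_mul_log (ne_of_gt hx.1)
      have := (hasDerivAt_id x).sub h1
      exact this.congr_deriv (by ring))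
    (fun x hx => by
      simp only [min_def, max_def] at hx
      norm_num at hx
      have : Real.log x ≤ 0 := Real.log_nonpos hx.1.le hx.2.le
      simpa using neg_nonneg.mpr this)
  exact this

lemma val_neg_log {s : ℝ} (h0 : 0 < s) (h1 : s ≤ 1) :
    ∫ x in (0:ℝ)..s, -Real.log x = s - s * Real.log s := by
  have hcont : ContinuousOn (fun x : ℝ => x - x * Real.log x) (Icc 0 s) :=
    (continuous_id.sub Real.continuous_mul_log).continuousOn
  have hderiv : ∀ x ∈ Ioo (0:ℝ) s, HasDerivWithinAt (fun x : ℝ => x - x * Real.log x)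
      (-Real.log x) (Ioi x) x := by
    intro x hx
    have h1 : HasDerivAt (fun y : ℝ => y * Real.log y) (Real.log x + 1) x :=
      Real.hasDerivAt_mul_log (ne_of_gt hx.1)
    have h2 := (hasDerivAt_id x).sub h1
    have h3 : HasDerivAt (fun x : ℝ => x - x * Real.log x) (-Real.log x) x := by
      exact h2.congr_deriv (by ring)
    exact h3.hasDerivWithinAt
  have hint : IntervalIntegrable (fun x => -Real.log x) volume 0 s :=
    II_neg_log.mono_set (by
      rw [uIcc_of_le h0.le, uIcc_of_le (by norm_num : (0:ℝ) ≤ 1)]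
      exact Icc_subset_Icc (le_refl _) h1)
  have := intervalIntegral.integral_eq_sub_of_hasDeriv_right_of_le h0.le hcont hderiv hint
  simp only [Real.log_zero, mul_zero, sub_zero, zero_sub, zero_mul] at this
  rw [intervalIntegral.integral_neg] at this ⊢
  rw [this]
lemma gg_bound {x : ℝ} (h0 : 0 < x) (h1 : x < 1) :
    |gg x| ≤ -Real.log x - Real.log (1-x) := by
  have hx : -Real.log x ≥ 0 := by
    simpa using neg_nonneg.mpr (Real.log_nonpos h0.le h1.le)
  have hx' : -Real.log (1-x) ≥ 0 := by
    simpa using neg_nonneg.mpr (Real.log_nonpos (by linarith) (by linarith))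
  rcases le_total x (1/2) with h | h
  · have := gg_abs_le (y := x) (by rw [abs_of_pos h0]; linarith)
    rw [abs_of_pos h0] at this
    linarith
  · have := gg_abs_le' (y := x) (by rw [abs_of_nonpos (by linarith : x - 1 ≤ 0)]; linarith)
    rw [abs_of_nonpos (by linarith : x - 1 ≤ 0)] at this
    have e : -(x-1) = 1 - x := by ring
    rw [e] at this
    linarith

lemma meas_gg : Measurable gg :=
  Real.measurable_log.comp
    ((continuous_abs.comp (Real.continuous_sin.comp
      (continuous_const.mul continuous_id))).measurable)

lemma II_negloghelper : IntervalIntegrable (fun x => -Real.log (1-x)) volume 0 1 := by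
  have := (II_neg_log.comp_sub_left 1).symm
  norm_num at this
  exact this

lemma II_gg01 : IntervalIntegrable gg volume 0 1 := by
  rw [intervalIntegrable_iff_integrableOn_Ioc_of_le (by norm_num)]
  have hmaj : IntegrableOn (fun x => -Real.log x - Real.log (1-x)) (Ioc (0:ℝ) 1) volume := by
    have : IntervalIntegrable (fun x => -Real.log x - Real.log (1-x)) volume 0 1 := by
      have := II_neg_log.add II_negloghelper
      simpa [sub_eq_add_neg] using this
    exact this.1
  apply Integrable.mono hmaj meas_gg.aestronglyMeasurable
  refine (ae_restrict_iff' measurableSet_Ioc).mpr (Filter.Eventually.of_forall ?_)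
  intro x hx
  rcases eq_or_lt_of_le hx.2 with rfl | hlt
  · have : gg 1 = 0 := by simp [gg, Real.sin_pi]
    rw [Real.norm_eq_abs, this]
    simp [abs_nonneg]
  · have h := gg_bound hx.1 hlt
    rw [Real.norm_eq_abs, Real.norm_eq_abs]
    exact h.trans (le_abs_self _)

lemma II_gg02 : IntervalIntegrable gg volume 0 2 := by
  have h2 : IntervalIntegrable gg volume 1 2 := by
    have := II_gg01.comp_sub_right 1
    rw [show (fun x => gg (x - 1)) = gg from funext gg_per] at this
    norm_num at this
    exact this
  exact II_gg01.trans h2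

lemma II_F {δ : ℝ} (h0 : 0 ≤ δ) (h1 : δ ≤ 1) :
    IntervalIntegrable (fun x => |gg (x+δ) - gg x|) volume 0 1 := by
  have hshift : IntervalIntegrable (fun x => gg (x+δ)) volume 0 1 := by
    have hsub : IntervalIntegrable gg volume δ (1+δ) := by
      apply II_gg02.mono_set
      rw [uIcc_of_le (by linarith), uIcc_of_le (by norm_num)]
      exact Icc_subset_Icc (by linarith) (by linarith)
    have := hsub.comp_add_right δ
    norm_num at this
    exact this
  exact (hshift.sub II_gg01).abs

lemma log1p_ge {u : ℝ} (h0 : 0 ≤ u) (h1 : u ≤ 1) : u/2 ≤ Real.log (1+u) := by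
  have hp : (0:ℝ) < 1 + u := by linarith
  have := Real.log_le_sub_one_of_pos (x := (1+u)⁻¹) (by positivity)
  rw [Real.log_inv] at this
  have hi : (1+u) * (1+u)⁻¹ = 1 := mul_inv_cancel₀ hp.ne'
  have hnn : (0:ℝ) < (1+u)⁻¹ := by positivity
  nlinarith

lemma log_sub_log_le {a b : ℝ} (ha : 0 < a) (hb : 0 < b) :
    |Real.log b - Real.log a| ≤ |b - a| * (1/a + 1/b) := by
  have ia : 0 < 1/a := by positivity
  have ib : 0 < 1/b := by positivity
  have h1 : Real.log b - Real.log a ≤ (b-a) * (1/a) := by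
    have := Real.log_le_sub_one_of_pos (x := b/a) (by positivity)
    rw [Real.log_div hb.ne' ha.ne', div_sub_one ha.ne'] at this
    calc Real.log b - Real.log a ≤ (b-a)/a := this
    _ = (b-a) * (1/a) := by ring
  have h2 : Real.log a - Real.log b ≤ (a-b) * (1/b) := by
    have := Real.log_le_sub_one_of_pos (x := a/b) (by positivity)
    rw [Real.log_div ha.ne' hb.ne', div_sub_one hb.ne'] at this
    calc Real.log a - Real.log b ≤ (a-b)/b := this
    _ = (a-b) * (1/b) := by ring
  rw [abs_le]
  constructor
  · nlinarith [le_abs_self (a-b), abs_sub_comm a b, abs_nonneg (b-a)]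
  · nlinarith [le_abs_self (b-a), abs_nonneg (b-a)]

lemma sin_shift_diff_le {x δ : ℝ} (h0 : 0 ≤ δ) (h1 : δ ≤ 1) :
    |Real.sin (Real.pi*(x+δ)) - Real.sin (Real.pi*x)| ≤ Real.pi * δ := by
  have hπ := Real.pi_pos
  rw [Real.sin_sub_sin]
  have e1 : (Real.pi*(x+δ) - Real.pi*x)/2 = Real.pi*δ/2 := by ring
  rw [e1]
  have hs : |Real.sin (Real.pi*δ/2)| ≤ Real.pi*δ/2 := by
    rw [abs_of_nonneg (Real.sin_nonneg_of_nonneg_of_le_pi (by positivity) (by nlinarith))]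
    exact Real.sin_le (by positivity)
  rw [abs_mul, abs_mul]
  have := Real.abs_cos_le_one ((Real.pi*(x+δ) + Real.pi*x)/2)
  have h2 : |(2:ℝ)| = 2 := by norm_num
  rw [h2]
  nlinarith [abs_nonneg (Real.sin (Real.pi*δ/2)), abs_nonneg (Real.cos ((Real.pi*(x+δ) + Real.pi*x)/2))]

lemma my_mono_ioc {f g : ℝ → ℝ} {a b : ℝ} (hab : a ≤ b)
    (hf : IntervalIntegrable f volume a b) (hg : IntervalIntegrable g volume a b)
    (h : ∀ x ∈ Ioc a b, f x ≤ g x) :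
    (∫ x in a..b, f x) ≤ ∫ x in a..b, g x := by
  simpa only [intervalIntegral.integral_of_le hab] using
    setIntegral_mono_on hf.1 hg.1 measurableSet_Ioc h
lemma lower_piece {δ : ℝ} (hδ0 : 0 < δ) (hδ : δ < 1/64) :
    (1/13) * (δ * |Real.log δ|) ≤ ∫ x in (0:ℝ)..1, |gg (x+δ) - gg x| := by
  have hπ := Real.pi_pos
  have hπ315 := Real.pi_lt_d2
  have hπ1 : 1 < Real.pi := by linarith [Real.two_le_pi]
  set L : ℝ := -Real.log δ with hLdef
  have habsL : |Real.log δ| = L := by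
    rw [abs_of_nonpos (Real.log_nonpos hδ0.le (by linarith))]
  have hlog64 : Real.log 64 = 2 * Real.log 8 := by
    rw [show (64:ℝ) = 8*8 by norm_num, Real.log_mul (by norm_num) (by norm_num)]; ring
  have hL64 : Real.log 64 ≤ L := by
    have h1 : Real.log δ < Real.log (1/64) := Real.log_lt_log hδ0 hδ
    rw [show (1:ℝ)/64 = 64⁻¹ by norm_num, Real.log_inv] at h1
    linarith
  have hlog8 : 0 < Real.log 8 := Real.log_pos (by norm_num)
  have hLpos : 0 < L := by linarith
  -- pointwise bound
  have hpt : ∀ x ∈ Icc δ (1/8:ℝ), δ/(2*Real.pi) * (1/x) ≤ |gg (x+δ) - gg x| := by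
    intro x hx
    obtain ⟨hx1, hx2⟩ := hx
    have hx0 : 0 < x := lt_of_lt_of_le hδ0 hx1
    have ha : 0 < Real.sin (Real.pi*x) := sin_pi_pos hx0 (by linarith)
    have hb : 0 < Real.sin (Real.pi*(x+δ)) := sin_pi_pos (by linarith) (by linarith)
    set a := Real.sin (Real.pi*x)
    set b := Real.sin (Real.pi*(x+δ))
    have hba : δ ≤ b - a := by
      have e := Real.sin_sub_sin (Real.pi*(x+δ)) (Real.pi*x)
      have hsd : δ ≤ Real.sin ((Real.pi*(x+δ) - Real.pi*x)/2) := by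
        rw [show (Real.pi*(x+δ) - Real.pi*x)/2 = Real.pi*(δ/2) by ring]
        have := sin_ge_two_mul (x := δ/2) (by linarith) (by linarith)
        linarith
      have hcm : 1/2 ≤ Real.cos ((Real.pi*(x+δ) + Real.pi*x)/2) := by
        have h1 : Real.cos (Real.pi/3) ≤ Real.cos ((Real.pi*(x+δ) + Real.pi*x)/2) := by
          apply Real.cos_le_cos_of_nonneg_of_le_pi (by positivity) (by linarith) (by nlinarith)
        rwa [Real.cos_pi_div_three] at h1
      have hsd0 : 0 ≤ Real.sin ((Real.pi*(x+δ) - Real.pi*x)/2) := by linarith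
      nlinarith [e]
    have ha_le : a ≤ Real.pi * x := Real.sin_le (by positivity)
    have hpx : 0 < Real.pi * x := by positivity
    set u := δ/(Real.pi*x) with hu
    have hu0 : 0 ≤ u := by positivity
    have hu1 : u ≤ 1 := by
      rw [hu, div_le_one hpx]; nlinarith
    have hratio : 1 + u ≤ b/a := by
      rw [le_div_iff₀ ha]
      have e1 : δ/(Real.pi*x)*(Real.pi*x) = δ := div_mul_cancel₀ _ hpx.ne'
      have e2 : u * a ≤ u * (Real.pi * x) :=
        mul_le_mul_of_nonneg_left ha_le hu0
      rw [hu] at e2; rw [e1] at e2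
      nlinarith
    have hlog1 : u/2 ≤ Real.log (1+u) := log1p_ge hu0 hu1
    have hlog2 : Real.log (1+u) ≤ Real.log (b/a) :=
      Real.log_le_log (by linarith) hratio
    have hgg : gg (x+δ) - gg x = Real.log b - Real.log a := by
      unfold gg
      rw [abs_of_pos ha, abs_of_pos hb]
    have hdiv : Real.log (b/a) = Real.log b - Real.log a := Real.log_div hb.ne' ha.ne'
    have e3 : δ/(2*Real.pi) * (1/x) = u/2 := by
      rw [hu]; ring
    calc δ/(2*Real.pi) * (1/x) = u/2 := e3
    _ ≤ Real.log (b/a) := le_trans hlog1 hlog2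
    _ = gg (x+δ) - gg x := by rw [hdiv, hgg]
    _ ≤ |gg (x+δ) - gg x| := le_abs_self _
  -- integrate
  have h8 : δ ≤ (1/8:ℝ) := by linarith
  have hIIbound : IntervalIntegrable (fun x => δ/(2*Real.pi) * (1/x)) volume δ (1/8) := by
    apply IntervalIntegrable.const_mul
    apply intervalIntegrable_one_div
    · intro x hx
      rw [uIcc_of_le h8] at hx
      exact ne_of_gt (lt_of_lt_of_le hδ0 hx.1)
    · exact continuousOn_id
  have hIIF : IntervalIntegrable (fun x => |gg (x+δ) - gg x|) volume δ (1/8) := by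
    apply (II_F hδ0.le (by linarith)).mono_set
    rw [uIcc_of_le h8, uIcc_of_le (by norm_num : (0:ℝ) ≤ 1)]
    exact Icc_subset_Icc (by linarith) (by norm_num)
  have hstep1 : (∫ x in δ..(1/8:ℝ), δ/(2*Real.pi) * (1/x)) ≤
      ∫ x in δ..(1/8:ℝ), |gg (x+δ) - gg x| :=
    intervalIntegral.integral_mono_on h8 hIIbound hIIF hpt
  have hstep2 : (∫ x in δ..(1/8:ℝ), |gg (x+δ) - gg x|) ≤
      ∫ x in (0:ℝ)..1, |gg (x+δ) - gg x| := by
    apply intervalIntegral.integral_mono_interval hδ0.le h8 (by norm_num)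
    · exact Filter.Eventually.of_forall (fun x => abs_nonneg _)
    · exact II_F hδ0.le (by linarith)
  have hval : (∫ x in δ..(1/8:ℝ), δ/(2*Real.pi) * (1/x)) =
      δ/(2*Real.pi) * Real.log ((1/8)/δ) := by
    rw [intervalIntegral.integral_const_mul, integral_one_div]
    rw [uIcc_of_le h8]
    intro h
    exact absurd h.1 (by linarith)
  have hlogval : Real.log ((1/8)/δ) = L - Real.log 8 := by
    rw [Real.log_div (by norm_num) hδ0.ne', show (1:ℝ)/8 = 8⁻¹ by norm_num, Real.log_inv]
    ring
  have hfin : (1/13) * (δ * L) ≤ δ/(2*Real.pi) * Real.log ((1/8)/δ) := by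
    rw [hlogval]
    have h1 : L - Real.log 8 ≥ L/2 := by linarith
    have h2 : δ/(2*Real.pi) * (L - Real.log 8) ≥ δ/(2*Real.pi) * (L/2) := by
      apply mul_le_mul_of_nonneg_left h1 (by positivity)
    have h3 : δ/(2*Real.pi) * (L/2) ≥ (1/13) * (δ * L) := by
      have hkey : (1/13:ℝ) ≤ 1/(4*Real.pi) := by
        rw [div_le_div_iff₀ (by norm_num) (by positivity)]
        nlinarith
      have h5 : (1/13) * (δ*L) ≤ (1/(4*Real.pi)) * (δ*L) :=
        mul_le_mul_of_nonneg_right hkey (by positivity)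
      have h6 : (1/(4*Real.pi)) * (δ*L) = δ/(2*Real.pi) * (L/2) := by ring
      linarith
    linarith
  rw [habsL]
  calc (1/13) * (δ * L) ≤ δ/(2*Real.pi) * Real.log ((1/8)/δ) := hfin
  _ = ∫ x in δ..(1/8:ℝ), δ/(2*Real.pi) * (1/x) := hval.symm
  _ ≤ _ := le_trans hstep1 hstep2
lemma abs_sub'' (a b : ℝ) : |a - b| ≤ |a| + |b| := by
  calc |a - b| = |a + (-b)| := by rw [sub_eq_add_neg]
  _ ≤ |a| + |(-b)| := abs_add_le _ _
  _ = |a| + |b| := by rw [abs_neg]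

noncomputable def NL (t : ℝ) : ℝ := -Real.log |t|

lemma NL_neg (t : ℝ) : NL (-t) = NL t := by unfold NL; rw [abs_neg]

lemma II_NL_01 : IntervalIntegrable NL volume 0 1 := by
  rw [intervalIntegrable_iff_integrableOn_Ioc_of_le (by norm_num)]
  apply (II_neg_log.1).congr_fun (fun t ht => ?_) measurableSet_Ioc
  unfold NL
  rw [abs_of_pos ht.1]

lemma II_NL_neg : IntervalIntegrable NL volume (-1) 0 := by
  have h := (IntervalIntegrable.iff_comp_neg).mp II_NL_01
  rw [show (fun x => NL (-x)) = NL from funext NL_neg] at h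
  rw [neg_zero] at h
  exact h.symm

lemma II_NL_11 : IntervalIntegrable NL volume (-1) 1 := II_NL_neg.trans II_NL_01

lemma val_NL {s : ℝ} (h0 : 0 < s) (h1 : s ≤ 1) :
    ∫ t in (0:ℝ)..s, NL t = s - s * Real.log s := by
  rw [show (∫ t in (0:ℝ)..s, NL t) = ∫ t in (0:ℝ)..s, -Real.log t from
    intervalIntegral.integral_congr (fun t ht => ?_), val_neg_log h0 h1]
  rw [uIcc_of_le h0.le] at ht
  unfold NL
  rcases eq_or_lt_of_le ht.1 with rfl | hlt
  · simp
  · rw [abs_of_pos hlt]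

lemma val_NL_neg {s : ℝ} (h0 : 0 < s) (h1 : s ≤ 1) :
    ∫ t in (-s)..(0:ℝ), NL t = s - s * Real.log s := by
  have h := intervalIntegral.integral_comp_neg (a := (0:ℝ)) (b := s) NL
  rw [show (fun x => NL (-x)) = NL from funext NL_neg] at h
  rw [neg_zero] at h
  rw [← h]
  exact val_NL h0 h1

lemma piece1 {δ : ℝ} (hδ0 : 0 < δ) (hδ : δ < 1/64) {L : ℝ} (hLdef : L = -Real.log δ)
    (hL4 : 4 ≤ L) :
    ∫ x in (0:ℝ)..(2*δ), |gg (x+δ) - gg x| ≤ 5*δ*L := by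
  have i1 : IntervalIntegrable (fun x => |gg (x+δ) - gg x|) volume 0 (2*δ) := by
    apply (II_F hδ0.le (by linarith)).mono_set
    rw [uIcc_of_le (by linarith), uIcc_of_le (by norm_num : (0:ℝ) ≤ 1)]
    exact Icc_subset_Icc le_rfl (by linarith)
  have ibd : IntervalIntegrable (fun x => 2 * (-Real.log x)) volume 0 (2*δ) := by
    apply IntervalIntegrable.const_mul
    apply II_neg_log.mono_set
    rw [uIcc_of_le (by linarith), uIcc_of_le (by norm_num : (0:ℝ) ≤ 1)]
    exact Icc_subset_Icc le_rfl (by linarith)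
  have hmono : (∫ x in (0:ℝ)..(2*δ), |gg (x+δ) - gg x|) ≤
      ∫ x in (0:ℝ)..(2*δ), 2 * (-Real.log x) := by
    apply my_mono_ioc (by linarith) i1 ibd
    intro x hx
    have hx0 : 0 < x := hx.1
    have hx2 : x ≤ 2*δ := hx.2
    have h1 : |gg x| ≤ -Real.log x := by
      have := gg_abs_le (y := x) (by rw [abs_of_pos hx0]; linarith)
      rwa [abs_of_pos hx0] at this
    have h2 : |gg (x+δ)| ≤ -Real.log x := by
      have := gg_abs_le (y := x+δ) (by rw [abs_of_pos (by linarith)]; linarith)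
      rw [abs_of_pos (by linarith : (0:ℝ) < x+δ)] at this
      have hm : Real.log x ≤ Real.log (x+δ) := Real.log_le_log hx0 (by linarith)
      linarith
    calc |gg (x+δ) - gg x| ≤ |gg (x+δ)| + |gg x| := abs_sub'' _ _
    _ ≤ 2 * (-Real.log x) := by linarith
  have hval : (∫ x in (0:ℝ)..(2*δ), 2 * (-Real.log x)) = 2 * (2*δ - 2*δ*Real.log (2*δ)) := by
    rw [intervalIntegral.integral_const_mul, val_neg_log (by linarith) (by linarith)]
  have hlog2δ : Real.log (2*δ) = Real.log 2 + Real.log δ := Real.log_mul (by norm_num) hδ0.ne'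
  have hlog2 : 0 < Real.log 2 := Real.log_pos (by norm_num)
  calc (∫ x in (0:ℝ)..(2*δ), |gg (x+δ) - gg x|) ≤ 2 * (2*δ - 2*δ*Real.log (2*δ)) := by
        rw [← hval]; exact hmono
  _ = 4*δ*(1 - Real.log 2 + L) := by rw [hlog2δ, hLdef]; ring
  _ ≤ 5*δ*L := by nlinarith
lemma piece3 {δ : ℝ} (hδ0 : 0 < δ) (hδ : δ < 1/64) {L : ℝ} (hLdef : L = -Real.log δ)
    (hL4 : 4 ≤ L) :
    ∫ x in (1-2*δ)..1, |gg (x+δ) - gg x| ≤ 5*δ*L := by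
  have hNLa : IntervalIntegrable NL volume (-δ) δ := by
    apply II_NL_11.mono_set
    rw [uIcc_of_le (by linarith), uIcc_of_le (by norm_num : (-1:ℝ) ≤ 1)]
    exact Icc_subset_Icc (by linarith) (by linarith)
  have hNLa1 : IntervalIntegrable NL volume (-δ) 0 := by
    apply II_NL_11.mono_set
    rw [uIcc_of_le (by linarith), uIcc_of_le (by norm_num : (-1:ℝ) ≤ 1)]
    exact Icc_subset_Icc (by linarith) (by linarith)
  have hNLa2 : IntervalIntegrable NL volume 0 δ := by
    apply II_NL_11.mono_set
    rw [uIcc_of_le (by linarith), uIcc_of_le (by norm_num : (-1:ℝ) ≤ 1)]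
    exact Icc_subset_Icc (by linarith) (by linarith)
  have hNLb : IntervalIntegrable NL volume (-(2*δ)) 0 := by
    apply II_NL_11.mono_set
    rw [uIcc_of_le (by linarith), uIcc_of_le (by norm_num : (-1:ℝ) ≤ 1)]
    exact Icc_subset_Icc (by linarith) (by linarith)
  have iA : IntervalIntegrable (fun x => NL (x - (1-δ))) volume (1-2*δ) 1 := by
    have := hNLa.comp_sub_right (1-δ)
    rw [show -δ + (1-δ) = 1-2*δ by ring, show δ + (1-δ) = 1 by ring] at this
    exact this
  have iB : IntervalIntegrable (fun x => NL (x - 1)) volume (1-2*δ) 1 := by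
    have := hNLb.comp_sub_right 1
    rw [show -(2*δ) + 1 = 1-2*δ by ring, show (0:ℝ) + 1 = 1 by norm_num] at this
    exact this
  have iφ := iA.add iB
  have i3 : IntervalIntegrable (fun x => |gg (x+δ) - gg x|) volume (1-2*δ) 1 := by
    apply (II_F hδ0.le (by linarith)).mono_set
    rw [uIcc_of_le (by linarith), uIcc_of_le (by norm_num : (0:ℝ) ≤ 1)]
    exact Icc_subset_Icc (by linarith) le_rfl
  have hmono : (∫ x in (1-2*δ)..1, |gg (x+δ) - gg x|) ≤
      ∫ x in (1-2*δ)..1, (NL (x - (1-δ)) + NL (x - 1)) := by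
    apply my_mono_ioc (by linarith) i3 (by exact iφ)
    intro x hx
    have hx1 : 1-2*δ < x := hx.1
    have hx2 : x ≤ 1 := hx.2
    have h1 : |gg x| ≤ NL (x - 1) := by
      have := gg_abs_le' (y := x) (by rw [abs_le]; constructor <;> linarith)
      exact this
    have h2 : |gg (x+δ)| ≤ NL (x - (1-δ)) := by
      have := gg_abs_le' (y := x+δ) (by rw [abs_le]; constructor <;> linarith)
      rw [show x + δ - 1 = x - (1-δ) by ring] at this
      exact this
    calc |gg (x+δ) - gg x| ≤ |gg (x+δ)| + |gg x| := abs_sub'' _ _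
    _ ≤ NL (x - (1-δ)) + NL (x - 1) := by linarith
  have vA : (∫ x in (1-2*δ)..1, NL (x - (1-δ))) = 2*(δ - δ*Real.log δ) := by
    rw [intervalIntegral.integral_comp_sub_right NL (1-δ)]
    rw [show (1-2*δ) - (1-δ) = -δ by ring, show (1:ℝ) - (1-δ) = δ by ring]
    rw [← intervalIntegral.integral_add_adjacent_intervals hNLa1 hNLa2]
    rw [val_NL_neg hδ0 (by linarith), val_NL hδ0 (by linarith)]
    ring
  have vB : (∫ x in (1-2*δ)..1, NL (x - 1)) = 2*δ - 2*δ*Real.log (2*δ) := by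
    rw [intervalIntegral.integral_comp_sub_right NL 1]
    rw [show (1-2*δ) - 1 = -(2*δ) by ring, show (1:ℝ) - 1 = 0 by norm_num]
    exact val_NL_neg (by linarith) (by linarith)
  have hsum : (∫ x in (1-2*δ)..1, (NL (x - (1-δ)) + NL (x - 1))) =
      2*(δ - δ*Real.log δ) + (2*δ - 2*δ*Real.log (2*δ)) := by
    rw [intervalIntegral.integral_add iA iB, vA, vB]
  have hlog2δ : Real.log (2*δ) = Real.log 2 + Real.log δ := Real.log_mul (by norm_num) hδ0.ne'
  have hlog2 : 0 < Real.log 2 := Real.log_pos (by norm_num)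
  have hlogδ : Real.log δ = -L := by rw [hLdef]; ring
  calc (∫ x in (1-2*δ)..1, |gg (x+δ) - gg x|) ≤
      2*(δ - δ*Real.log δ) + (2*δ - 2*δ*Real.log (2*δ)) := by rw [← hsum]; exact hmono
  _ = 4*δ*(1 + L) - 2*δ*Real.log 2 := by rw [hlog2δ, hlogδ]; ring
  _ ≤ 5*δ*L := by nlinarith
lemma piece2 {δ : ℝ} (hδ0 : 0 < δ) (hδ : δ < 1/64) {L : ℝ} (hLdef : L = -Real.log δ)
    (hL4 : 4 ≤ L) :
    ∫ x in (2*δ)..(1-2*δ), |gg (x+δ) - gg x| ≤ 2*Real.pi*δ*L := by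
  have hπ := Real.pi_pos
  have hab : 2*δ ≤ 1-2*δ := by linarith
  have hIcc : uIcc (2*δ) (1-2*δ) = Icc (2*δ) (1-2*δ) := uIcc_of_le hab
  -- integrability of the four components
  have c1 : IntervalIntegrable (fun x:ℝ => 1/x) volume (2*δ) (1-2*δ) := by
    apply ContinuousOn.intervalIntegrable
    rw [hIcc]
    exact continuousOn_const.div continuousOn_id
      (fun x hx => ne_of_gt (lt_of_lt_of_le (by linarith) hx.1))
  have c2 : IntervalIntegrable (fun x:ℝ => 1/(1-x)) volume (2*δ) (1-2*δ) := by
    apply ContinuousOn.intervalIntegrable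
    rw [hIcc]
    exact continuousOn_const.div ((continuous_const.sub continuous_id).continuousOn)
      (fun x hx => ne_of_gt (by first | (simp only [id_eq]; linarith [hx.1, hx.2]) | linarith [hx.1, hx.2]))
  have c3 : IntervalIntegrable (fun x:ℝ => 1/(x+δ)) volume (2*δ) (1-2*δ) := by
    apply ContinuousOn.intervalIntegrable
    rw [hIcc]
    exact continuousOn_const.div ((continuous_id.add continuous_const).continuousOn)
      (fun x hx => ne_of_gt (by first | (simp only [id_eq]; linarith [hx.1, hx.2]) | linarith [hx.1, hx.2]))
  have c4 : IntervalIntegrable (fun x:ℝ => 1/(1-δ-x)) volume (2*δ) (1-2*δ) := by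
    apply ContinuousOn.intervalIntegrable
    rw [hIcc]
    exact continuousOn_const.div ((continuous_const.sub continuous_id).continuousOn)
      (fun x hx => ne_of_gt (by first | (simp only [id_eq]; linarith [hx.1, hx.2]) | linarith [hx.1, hx.2]))
  have cφ : IntervalIntegrable
      (fun x:ℝ => Real.pi*δ/2 * (1/x + 1/(1-x) + 1/(x+δ) + 1/(1-δ-x))) volume (2*δ) (1-2*δ) :=
    (((c1.add c2).add c3).add c4).const_mul _
  have iF : IntervalIntegrable (fun x => |gg (x+δ) - gg x|) volume (2*δ) (1-2*δ) := by
    apply (II_F hδ0.le (by linarith)).mono_set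
    rw [hIcc, uIcc_of_le (by norm_num : (0:ℝ) ≤ 1)]
    exact Icc_subset_Icc (by linarith) (by linarith)
  -- pointwise bound
  have hmono : (∫ x in (2*δ)..(1-2*δ), |gg (x+δ) - gg x|) ≤
      ∫ x in (2*δ)..(1-2*δ), Real.pi*δ/2 * (1/x + 1/(1-x) + 1/(x+δ) + 1/(1-δ-x)) := by
    apply intervalIntegral.integral_mono_on hab iF cφ
    intro x hx
    obtain ⟨hx1, hx2⟩ := hx
    have hx0 : 0 < x := by linarith
    have hx1' : x < 1 := by linarith
    have ha : 0 < Real.sin (Real.pi*x) := sin_pi_pos hx0 hx1'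
    have hb : 0 < Real.sin (Real.pi*(x+δ)) := sin_pi_pos (by linarith) (by linarith)
    set a := Real.sin (Real.pi*x)
    set b := Real.sin (Real.pi*(x+δ))
    have hgg : gg (x+δ) - gg x = Real.log b - Real.log a := by
      unfold gg; rw [abs_of_pos ha, abs_of_pos hb]
    have h1 : |Real.log b - Real.log a| ≤ |b - a| * (1/a + 1/b) := log_sub_log_le ha hb
    have hd : |b - a| ≤ Real.pi * δ := sin_shift_diff_le hδ0.le (by linarith)
    have hsum0 : (0:ℝ) ≤ 1/a + 1/b := by positivity
    have h2 : |b - a| * (1/a + 1/b) ≤ Real.pi*δ * (1/a + 1/b) :=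
      mul_le_mul_of_nonneg_right hd hsum0
    have h1a : 1/a ≤ 1/(2*x*(1-x)) := by
      apply one_div_le_one_div_of_le (by nlinarith) (sin_ge_prod hx0.le hx1'.le)
    have h1b : 1/b ≤ 1/(2*(x+δ)*(1-(x+δ))) := by
      apply one_div_le_one_div_of_le (by nlinarith) (sin_ge_prod (by linarith) (by linarith))
    have hne1 : (1:ℝ)-x ≠ 0 := ne_of_gt (by linarith)
    have hnex : x ≠ 0 := hx0.ne'
    have heq1 : 1/(2*x*(1-x)) = 1/2*(1/x + 1/(1-x)) := by
      field_simp
      ring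
    have heq2 : 1/(2*(x+δ)*(1-(x+δ))) = 1/2*(1/(x+δ) + 1/(1-δ-x)) := by
      rw [show 1-(x+δ) = 1-δ-x by ring]
      have hh1 : x+δ ≠ 0 := ne_of_gt (by linarith)
      have hh2 : (1:ℝ)-δ-x ≠ 0 := ne_of_gt (by linarith)
      field_simp
      ring
    have h3 : 1/a + 1/b ≤ 1/2*(1/x + 1/(1-x)) + 1/2*(1/(x+δ) + 1/(1-δ-x)) := by
      rw [← heq1, ← heq2]; exact add_le_add h1a h1b
    calc |gg (x+δ) - gg x| = |Real.log b - Real.log a| := by rw [hgg]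
    _ ≤ |b - a| * (1/a + 1/b) := h1
    _ ≤ Real.pi*δ * (1/a + 1/b) := h2
    _ ≤ Real.pi*δ * (1/2*(1/x + 1/(1-x)) + 1/2*(1/(x+δ) + 1/(1-δ-x))) :=
        mul_le_mul_of_nonneg_left h3 (by positivity)
    _ = Real.pi*δ/2 * (1/x + 1/(1-x) + 1/(x+δ) + 1/(1-δ-x)) := by ring
  -- values of the four integrals
  have hLinv : L = Real.log δ⁻¹ := by rw [Real.log_inv, hLdef]
  have hdinv : 0 < δ⁻¹ := by positivity
  have hA1 : (∫ x in (2*δ)..(1-2*δ), 1/x) ≤ L := by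
    rw [integral_one_div (by rw [hIcc]; intro h; linarith [h.1]), hLinv]
    apply Real.log_le_log (div_pos (by linarith) (by linarith))
    rw [div_le_iff₀ (by linarith)]
    have e : δ⁻¹*(2*δ) = 2 := by field_simp
    rw [e]; linarith
  have hA2 : (∫ x in (2*δ)..(1-2*δ), 1/(1-x)) ≤ L := by
    have e := intervalIntegral.integral_comp_sub_left (a := 2*δ) (b := 1-2*δ)
      (fun t:ℝ => 1/t) 1
    rw [e, show (1:ℝ)-(1-2*δ) = 2*δ by ring]
    exact hA1
  have hA3 : (∫ x in (2*δ)..(1-2*δ), 1/(x+δ)) ≤ L := by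
    have e := intervalIntegral.integral_comp_add_right (a := 2*δ) (b := 1-2*δ)
      (fun t:ℝ => 1/t) δ
    rw [e, integral_one_div (by rw [uIcc_of_le (by linarith)]; intro h; linarith [h.1]), hLinv]
    apply Real.log_le_log (div_pos (by linarith) (by linarith))
    rw [div_le_iff₀ (by linarith)]
    have e2 : δ⁻¹*(2*δ+δ) = 3 := by field_simp; ring
    rw [e2]; linarith
  have hA4 : (∫ x in (2*δ)..(1-2*δ), 1/(1-δ-x)) ≤ L := by
    have e := intervalIntegral.integral_comp_sub_left (a := 2*δ) (b := 1-2*δ)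
      (fun t:ℝ => 1/t) (1-δ)
    rw [e, show (1-δ)-(1-2*δ) = δ by ring]
    rw [integral_one_div (by rw [uIcc_of_le (by linarith)]; intro h; linarith [h.1]), hLinv]
    apply Real.log_le_log (div_pos (by linarith) (by linarith))
    rw [div_le_iff₀ (by linarith)]
    have e2 : δ⁻¹*δ = 1 := by field_simp
    rw [e2]; linarith
  -- combine
  have hsplit : (∫ x in (2*δ)..(1-2*δ), Real.pi*δ/2 * (1/x + 1/(1-x) + 1/(x+δ) + 1/(1-δ-x)))
      = Real.pi*δ/2 * ((∫ x in (2*δ)..(1-2*δ), 1/x) + (∫ x in (2*δ)..(1-2*δ), 1/(1-x))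
        + (∫ x in (2*δ)..(1-2*δ), 1/(x+δ)) + (∫ x in (2*δ)..(1-2*δ), 1/(1-δ-x))) := by
    rw [intervalIntegral.integral_const_mul]
    rw [intervalIntegral.integral_add ((c1.add c2).add c3) c4,
        intervalIntegral.integral_add (c1.add c2) c3,
        intervalIntegral.integral_add c1 c2]
  have hLpos : 0 < L := by linarith
  calc (∫ x in (2*δ)..(1-2*δ), |gg (x+δ) - gg x|) ≤ _ := hmono
  _ = Real.pi*δ/2 * ((∫ x in (2*δ)..(1-2*δ), 1/x) + (∫ x in (2*δ)..(1-2*δ), 1/(1-x))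
        + (∫ x in (2*δ)..(1-2*δ), 1/(x+δ)) + (∫ x in (2*δ)..(1-2*δ), 1/(1-δ-x))) := hsplit
  _ ≤ Real.pi*δ/2 * (L + L + L + L) := by
      apply mul_le_mul_of_nonneg_left _ (by nlinarith)
      exact add_le_add (add_le_add (add_le_add hA1 hA2) hA3) hA4
  _ = 2*Real.pi*δ*L := by ring
lemma upper_piece {δ : ℝ} (hδ0 : 0 < δ) (hδ : δ < 1/64) :
    (∫ x in (0:ℝ)..1, |gg (x+δ) - gg x|) ≤ 20 * (δ * |Real.log δ|) := by
  have hπ := Real.pi_pos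
  have hπ315 := Real.pi_lt_d2
  set L : ℝ := -Real.log δ with hLdef
  have habsL : |Real.log δ| = L := by
    rw [abs_of_nonpos (Real.log_nonpos hδ0.le (by linarith))]
  have hlog2 := Real.log_two_gt_d9
  have hL4 : 4 ≤ L := by
    have h1 : Real.log δ < Real.log (1/64) := Real.log_lt_log hδ0 hδ
    rw [show (1:ℝ)/64 = 64⁻¹ by norm_num, Real.log_inv] at h1
    have h2 : Real.log 64 = 6 * Real.log 2 := by
      rw [show (64:ℝ) = 2^6 by norm_num, Real.log_pow]; push_cast; ring
    nlinarith
  have hIF := II_F hδ0.le (by linarith : δ ≤ 1)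
  have i1 : IntervalIntegrable (fun x => |gg (x+δ) - gg x|) volume 0 (2*δ) := by
    apply hIF.mono_set
    rw [uIcc_of_le (by linarith), uIcc_of_le (by norm_num : (0:ℝ) ≤ 1)]
    exact Icc_subset_Icc le_rfl (by linarith)
  have i2 : IntervalIntegrable (fun x => |gg (x+δ) - gg x|) volume (2*δ) (1-2*δ) := by
    apply hIF.mono_set
    rw [uIcc_of_le (by linarith), uIcc_of_le (by norm_num : (0:ℝ) ≤ 1)]
    exact Icc_subset_Icc (by linarith) (by linarith)
  have i3 : IntervalIntegrable (fun x => |gg (x+δ) - gg x|) volume (1-2*δ) 1 := by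
    apply hIF.mono_set
    rw [uIcc_of_le (by linarith), uIcc_of_le (by norm_num : (0:ℝ) ≤ 1)]
    exact Icc_subset_Icc (by linarith) le_rfl
  have hsplit : (∫ x in (0:ℝ)..1, |gg (x+δ) - gg x|) =
      (∫ x in (0:ℝ)..(2*δ), |gg (x+δ) - gg x|) +
      (∫ x in (2*δ)..(1-2*δ), |gg (x+δ) - gg x|) +
      (∫ x in (1-2*δ)..1, |gg (x+δ) - gg x|) := by
    rw [intervalIntegral.integral_add_adjacent_intervals i1 i2,
        intervalIntegral.integral_add_adjacent_intervals (i1.trans i2) i3]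
  have p1 := piece1 hδ0 hδ hLdef hL4
  have p2 := piece2 hδ0 hδ hLdef hL4
  have p3 := piece3 hδ0 hδ hLdef hL4
  rw [hsplit, habsL]
  have hδL : 0 < δ * L := mul_pos hδ0 (by linarith)
  have h7 : 2*Real.pi*δ*L ≤ 7*(δ*L) := by nlinarith
  have h5 : (5:ℝ)*δ*L = 5*(δ*L) := by ring
  linarith

theorem stmt8 : ∃ C₁ C₂ : ℝ, 0 < C₁ ∧ C₁ < C₂ ∧
    ∃ δ₀ > (0:ℝ), ∀ δ : ℝ, 0 < δ → δ < δ₀ →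
      C₁ * (δ * |Real.log δ|) ≤
        (∫ x in (0:ℝ)..1,
          |Real.log (abs (Real.sin (Real.pi * (x + δ)))) -
            Real.log (abs (Real.sin (Real.pi * x)))|) ∧
      (∫ x in (0:ℝ)..1,
          |Real.log (abs (Real.sin (Real.pi * (x + δ)))) -
            Real.log (abs (Real.sin (Real.pi * x)))|) ≤
        C₂ * (δ * |Real.log δ|) := by
  refine ⟨1/13, 20, by norm_num, by norm_num, 1/64, by norm_num, fun δ hδ0 hδ => ?_⟩
  have he : (∫ x in (0:ℝ)..1,
      |Real.log (abs (Real.sin (Real.pi * (x + δ)))) -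
        Real.log (abs (Real.sin (Real.pi * x)))|) =
      ∫ x in (0:ℝ)..1, |gg (x+δ) - gg x| := rfl
  rw [he]
  exact ⟨lower_piece hδ0 hδ, upper_piece hδ0 hδ⟩
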